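/- Let A and C be n×n real symmetric matrices with eigenvalue vectors λ(A), λ(C) arranged in decreasing order. Then the maximum of tr(C U A Uᵀ) over all orthogonal matrices U equals Σᵢ λᵢ(C) λᵢ(A). -/

import Mathlib

open Finset

/-- Decreasing rearrangement of a vector in ℝⁿ. -/
noncomputable def dsort {n : ℕ} (v : Fin n → ℝ) : Fin n → ℝ :=
  fun i => - ((fun j => - v j) ∘ Tuple.sort (fun j => - v j)) i

lemma dsort_apply {n : ℕ} (v : Fin n → ℝ) (i : Fin n) :
    dsort v i = v (Tuple.sort (fun j => - v j) i) := by
  simp [dsort]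

lemma antitone_dsort {n : ℕ} (v : Fin n → ℝ) : Antitone (dsort v) := by
  intro i j h
  have := Tuple.monotone_sort (fun j => - v j) h
  simp only [Function.comp_apply] at this
  simp only [dsort_apply]
  linarith

/-- general rearrangement bound -/
lemma sum_mul_perm_le {n : ℕ} (f g : Fin n → ℝ) (σ : Equiv.Perm (Fin n)) :
    ∑ i, f i * g (σ i) ≤ ∑ i, dsort f i * dsort g i := by
  set τf := Tuple.sort (fun j => - f j) with hτf
  set τg := Tuple.sort (fun j => - g j) with hτg
  have h1 : ∑ i, f i * g (σ i) = ∑ i, f (τf i) * g (σ (τf i)) :=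
    (Equiv.sum_comp τf (fun i => f i * g (σ i))).symm
  have hmono : Monovary (dsort f) (dsort g) :=
    (antitone_dsort f).monovary (antitone_dsort g)
  have h2 : ∀ i, g (σ (τf i)) = dsort g ((τg⁻¹ * (σ * τf) : Equiv.Perm (Fin n)) i) := by
    intro i
    simp [dsort_apply, ← hτg, Equiv.Perm.mul_apply]
  calc ∑ i, f i * g (σ i) = ∑ i, dsort f i * dsort g ((τg⁻¹ * (σ * τf) : Equiv.Perm (Fin n)) i) := by
        rw [h1]; exact Finset.sum_congr rfl fun i _ => by rw [dsort_apply, ← hτf, h2]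
    _ ≤ ∑ i, dsort f i * dsort g i := hmono.sum_mul_comp_perm_le_sum_mul

lemma sum_dsort_eq {n : ℕ} (f g : Fin n → ℝ) :
    ∃ σ : Equiv.Perm (Fin n), ∑ i, dsort f i * dsort g i = ∑ i, f i * g (σ i) := by
  set τf := Tuple.sort (fun j => - f j)
  set τg := Tuple.sort (fun j => - g j)
  refine ⟨τg * τf⁻¹, ?_⟩
  have : ∑ i, f i * g ((τg * τf⁻¹ : Equiv.Perm (Fin n)) i)
      = ∑ i, f (τf i) * g ((τg * τf⁻¹ : Equiv.Perm (Fin n)) (τf i)) :=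
    (Equiv.sum_comp τf _).symm
  rw [this]
  exact Finset.sum_congr rfl fun i _ => by simp [dsort_apply, Equiv.Perm.mul_apply, τf, τg]

lemma trace_diag_conj {n : ℕ} (c a : Fin n → ℝ) (V : Matrix (Fin n) (Fin n) ℝ) :
    Matrix.trace (Matrix.diagonal c * V * Matrix.diagonal a * V.transpose)
      = ∑ i, ∑ j, c i * a j * (V i j)^2 := by
  simp only [Matrix.trace, Matrix.diag_apply, Matrix.mul_apply, Matrix.transpose_apply,
    Matrix.diagonal_apply, ite_mul, zero_mul, mul_ite, mul_zero, Finset.sum_ite_eq,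
    Finset.sum_ite_eq', Finset.mem_univ, if_true]
  refine Finset.sum_congr rfl fun i _ => Finset.sum_congr rfl fun j _ => ?_
  ring

lemma permMatrix_apply' {n : ℕ} (σ : Equiv.Perm (Fin n)) (i j : Fin n) :
    σ.permMatrix ℝ i j = if σ i = j then 1 else 0 := by
  simp [Equiv.Perm.permMatrix, PEquiv.toMatrix_apply, Equiv.toPEquiv_apply, eq_comm]

lemma permMatrix_mul_transpose {n : ℕ} (σ : Equiv.Perm (Fin n)) :
    σ.permMatrix ℝ * (σ.permMatrix ℝ).transpose = 1 := by
  ext i k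
  simp only [Matrix.mul_apply, Matrix.transpose_apply, permMatrix_apply']
  simp only [ite_mul, one_mul, zero_mul, Finset.sum_ite_eq, Finset.mem_univ, if_true]
  by_cases h : i = k
  · simp [h, Matrix.one_apply]
  · simp only [Matrix.one_apply_ne h, ite_eq_right_iff]
    exact fun hk => absurd (σ.injective hk).symm h

/-- Real Hermitian matrix: spectral theorem with transpose. -/
lemma real_spectral {n : ℕ} {A : Matrix (Fin n) (Fin n) ℝ} (hA : A.IsHermitian) :
    A = (hA.eigenvectorUnitary : Matrix (Fin n) (Fin n) ℝ)
      * Matrix.diagonal hA.eigenvalues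
      * (hA.eigenvectorUnitary : Matrix (Fin n) (Fin n) ℝ).transpose := by
  have := hA.spectral_theorem
  rw [Unitary.conjStarAlgAut_apply] at this
  rwa [Matrix.star_eq_conjTranspose, Matrix.conjTranspose_eq_transpose_of_trivial,
    RCLike.ofReal_real_eq_id, Function.id_comp] at this

lemma orth_mul {n : ℕ} {P : Matrix (Fin n) (Fin n) ℝ}
    (hP : P ∈ Matrix.unitaryGroup (Fin n) ℝ) :
    P * P.transpose = 1 ∧ P.transpose * P = 1 := by
  constructor
  · have := Matrix.mem_unitaryGroup_iff.mp hP
    rwa [Matrix.star_eq_conjTranspose, Matrix.conjTranspose_eq_transpose_of_trivial] at this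
  · have := Matrix.mem_unitaryGroup_iff'.mp hP
    rwa [Matrix.star_eq_conjTranspose, Matrix.conjTranspose_eq_transpose_of_trivial] at this

lemma trace_key {n : ℕ} (c a : Fin n → ℝ) (Q P U : Matrix (Fin n) (Fin n) ℝ) :
    Matrix.trace (Q * Matrix.diagonal c * Q.transpose * U
        * (P * Matrix.diagonal a * P.transpose) * U.transpose)
      = Matrix.trace (Matrix.diagonal c * (Q.transpose * U * P) * Matrix.diagonal a
          * (Q.transpose * U * P).transpose) := by
  rw [show Q * Matrix.diagonal c * Q.transpose * U
        * (P * Matrix.diagonal a * P.transpose) * U.transpose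
      = Q * (Matrix.diagonal c * (Q.transpose * U * P) * Matrix.diagonal a
          * (P.transpose * U.transpose)) from by simp only [Matrix.mul_assoc],
    Matrix.trace_mul_comm]
  congr 1
  simp only [Matrix.transpose_mul, Matrix.transpose_transpose, Matrix.mul_assoc]

lemma orth_conj {n : ℕ} {Q P V : Matrix (Fin n) (Fin n) ℝ}
    (hQ : Q * Q.transpose = 1) (hP : P.transpose * P = 1) (hV : V * V.transpose = 1) :
    (Q * V * P.transpose) * (Q * V * P.transpose).transpose = 1 := by
  have h : Q * V * P.transpose * (Q * V * P.transpose).transpose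
      = Q * (V * ((P.transpose * P) * (V.transpose * Q.transpose))) := by
    simp only [Matrix.transpose_mul, Matrix.transpose_transpose, Matrix.mul_assoc]
  rw [h, hP, one_mul, ← Matrix.mul_assoc V, hV, one_mul, hQ]

lemma conj_cancel {n : ℕ} {Q P V : Matrix (Fin n) (Fin n) ℝ}
    (hQ : Q.transpose * Q = 1) (hP : P.transpose * P = 1) :
    Q.transpose * (Q * V * P.transpose) * P = V := by
  have h : Q.transpose * (Q * V * P.transpose) * P
      = Q.transpose * Q * V * (P.transpose * P) := by
    simp only [Matrix.mul_assoc]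
  rw [h, hQ, one_mul, hP, mul_one]

theorem stmt11 {n : ℕ} (A C : Matrix (Fin n) (Fin n) ℝ)
    (hA : A.IsHermitian) (hC : C.IsHermitian) :
    IsGreatest
      {r : ℝ | ∃ U : Matrix (Fin n) (Fin n) ℝ, U * U.transpose = 1 ∧
        r = Matrix.trace (C * U * A * U.transpose)}
      (∑ i, dsort hC.eigenvalues i * dsort hA.eigenvalues i) := by
  classical
  set c := hC.eigenvalues with hc
  set a := hA.eigenvalues with ha
  set Q : Matrix (Fin n) (Fin n) ℝ := (hC.eigenvectorUnitary : Matrix (Fin n) (Fin n) ℝ) with hQdef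
  set P : Matrix (Fin n) (Fin n) ℝ := (hA.eigenvectorUnitary : Matrix (Fin n) (Fin n) ℝ) with hPdef
  obtain ⟨hQ1, hQ2⟩ := orth_mul (hC.eigenvectorUnitary).2
  obtain ⟨hP1, hP2⟩ := orth_mul (hA.eigenvectorUnitary).2
  have hCs : C = Q * Matrix.diagonal c * Q.transpose := real_spectral hC
  have hAs : A = P * Matrix.diagonal a * P.transpose := real_spectral hA
  -- general formula for the trace
  have htr : ∀ U : Matrix (Fin n) (Fin n) ℝ,
      Matrix.trace (C * U * A * U.transpose)
        = ∑ i, ∑ j, c i * a j * ((Q.transpose * U * P) i j)^2 := by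
    intro U
    rw [show C * U * A * U.transpose
        = Q * Matrix.diagonal c * Q.transpose * U
            * (P * Matrix.diagonal a * P.transpose) * U.transpose from by
      rw [← hCs, ← hAs]]
    rw [trace_key, trace_diag_conj]
  constructor
  · -- membership
    obtain ⟨σ0, hσ0⟩ := sum_dsort_eq c a
    refine ⟨Q * σ0.permMatrix ℝ * P.transpose, ?_, ?_⟩
    · exact orth_conj hQ1 hP2 (permMatrix_mul_transpose σ0)
    · rw [htr, conj_cancel hQ2 hP2, hσ0]
      symm
      refine Finset.sum_congr rfl fun i _ => ?_
      rw [Finset.sum_eq_single (σ0 i)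
        (fun j _ hj => by
          rw [permMatrix_apply', if_neg (fun h : σ0 i = j => hj h.symm)]; ring)
        (by simp)]
      rw [permMatrix_apply', if_pos rfl]; ring
  · -- upper bound
    rintro r ⟨U, hU, rfl⟩
    rw [htr U]
    set V : Matrix (Fin n) (Fin n) ℝ := Q.transpose * U * P with hVdef
    have hV1 : V * V.transpose = 1 := by
      have h : V * V.transpose
          = Q.transpose * (U * ((P * P.transpose) * (U.transpose * Q))) := by
        simp only [hVdef, Matrix.transpose_mul, Matrix.transpose_transpose, Matrix.mul_assoc]
      rw [h, hP1, one_mul, ← Matrix.mul_assoc U, hU, one_mul, hQ2]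
    have hV2 : V.transpose * V = 1 := mul_eq_one_comm.mp hV1
    have hS : Matrix.of (fun i j => (V i j)^2) ∈ doublyStochastic ℝ (Fin n) := by
      rw [mem_doublyStochastic_iff_sum]
      refine ⟨fun i j => sq_nonneg _, fun i => ?_, fun j => ?_⟩
      · have h := Matrix.ext_iff.mpr hV1 i i
        simp only [Matrix.mul_apply, Matrix.transpose_apply, Matrix.one_apply_eq] at h
        simpa [pow_two] using h
      · have h := Matrix.ext_iff.mpr hV2 j j
        simp only [Matrix.mul_apply, Matrix.transpose_apply, Matrix.one_apply_eq] at h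
        simpa [pow_two] using h
    obtain ⟨w, hw0, hw1, hSw⟩ := exists_eq_sum_perm_of_mem_doublyStochastic hS
    have hentry : ∀ i j, (V i j)^2 = ∑ σ : Equiv.Perm (Fin n),
        w σ * (if σ i = j then 1 else 0) := by
      intro i j
      have := Matrix.ext_iff.mpr hSw i j
      simp only [Matrix.sum_apply, Matrix.smul_apply, permMatrix_apply', smul_eq_mul,
        Matrix.of_apply] at this
      exact this.symm
    calc ∑ i, ∑ j, c i * a j * (V i j)^2
        = ∑ i, ∑ j, ∑ σ : Equiv.Perm (Fin n),
            w σ * (c i * a j * (if σ i = j then 1 else 0)) := by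
          refine Finset.sum_congr rfl fun i _ => Finset.sum_congr rfl fun j _ => ?_
          rw [hentry, Finset.mul_sum]
          exact Finset.sum_congr rfl fun σ _ => by ring
      _ = ∑ σ : Equiv.Perm (Fin n), ∑ i, ∑ j,
            w σ * (c i * a j * (if σ i = j then 1 else 0)) := by
          rw [show (∑ i, ∑ j, ∑ σ : Equiv.Perm (Fin n),
              w σ * (c i * a j * (if σ i = j then 1 else 0)))
            = ∑ i, ∑ σ : Equiv.Perm (Fin n), ∑ j,
              w σ * (c i * a j * (if σ i = j then 1 else 0)) from
            Finset.sum_congr rfl fun i _ => Finset.sum_comm]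
          exact Finset.sum_comm
      _ = ∑ σ : Equiv.Perm (Fin n), w σ * ∑ i, c i * a (σ i) := by
          refine Finset.sum_congr rfl fun σ _ => ?_
          rw [Finset.mul_sum]
          refine Finset.sum_congr rfl fun i _ => ?_
          rw [Finset.sum_eq_single (σ i)
            (fun j _ hj => by simp [if_neg (fun h : σ i = j => hj h.symm)])
            (by simp)]
          simp
      _ ≤ ∑ σ : Equiv.Perm (Fin n), w σ * ∑ i, dsort c i * dsort a i :=
          Finset.sum_le_sum fun σ _ =>
            mul_le_mul_of_nonneg_left (sum_mul_perm_le c a σ) (hw0 σ)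
      _ = ∑ i, dsort c i * dsort a i := by rw [← Finset.sum_mul, hw1, one_mul]
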